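/- There exist an orthogonal matrix Q ∈ ℝ^{n×n} (QᵀQ = I), node weights w' : Fin n₁ → ℝ with w' i ≠ 0 for all i, and edge weights u' : Fin n₁ → ℝ with u' i ≠ 0 for all i ≠ 0, such that M_T = Q · B, where B is the n×n₁ matrix whose top n₁ rows form the Generation Matrix G'(w',u') of the 1-order subtree T⁽¹⁾ and whose remaining n − n₁ rows are all zero. -/

import Mathlib

open Matrix Finset

noncomputable def sqwAux (n₁ : ℕ) (par : ℕ → ℕ) (c : ℕ → ℕ) : ℕ → ℝ
  | j => 1 + (c j : ℝ) - ∑ i ∈ (Finset.Ioo j n₁).attach,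
      if par i.1 = j then (sqwAux n₁ par c i.1)⁻¹ else 0
  termination_by j => n₁ - j
  decreasing_by
    have := Finset.mem_Ioo.mp i.2
    omega

theorem sqwAux_eq (n₁ : ℕ) (par : ℕ → ℕ) (c : ℕ → ℕ) (j : ℕ) :
    sqwAux n₁ par c j = 1 + (c j : ℝ) -
      ∑ i ∈ (Finset.Ioo j n₁).filter (fun i => par i = j), (sqwAux n₁ par c i)⁻¹ := by
  rw [sqwAux, Finset.sum_filter, ← Finset.sum_attach (Finset.Ioo j n₁)
    (fun i => if par i = j then (sqwAux n₁ par c i)⁻¹ else 0)]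

theorem sqwAux_gt_one (n₁ : ℕ) (par : ℕ → ℕ) (c : ℕ → ℕ)
    (hc : ∀ j < n₁, ((Finset.Ioo j n₁).filter (fun i => par i = j)).card ≤ c j ∧ 1 ≤ c j) :
    ∀ j < n₁, 1 < sqwAux n₁ par c j := by
  suffices H : ∀ m j, n₁ - j = m → j < n₁ → 1 < sqwAux n₁ par c j from
    fun j hj => H _ j rfl hj
  intro m
  induction m using Nat.strong_induction_on with
  | _ m ih =>
  intro j hm hj
  rw [sqwAux_eq]
  set s := (Finset.Ioo j n₁).filter (fun i => par i = j) with hs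
  have hterm : ∀ i ∈ s, (sqwAux n₁ par c i)⁻¹ < 1 ∧ 0 < (sqwAux n₁ par c i)⁻¹ := by
    intro i hi
    simp only [hs, Finset.mem_filter, Finset.mem_Ioo] at hi
    have h1 : 1 < sqwAux n₁ par c i := ih (n₁ - i) (by omega) i rfl hi.1.2
    constructor
    · rw [inv_lt_one_iff₀]; right; exact h1
    · positivity
  have hsum : ∑ i ∈ s, (sqwAux n₁ par c i)⁻¹ < (c j : ℝ) := by
    rcases Finset.eq_empty_or_nonempty s with h | h
    · rw [h]; simp
      exact_mod_cast Nat.lt_of_lt_of_le Nat.zero_lt_one (hc j hj).2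
    · calc ∑ i ∈ s, (sqwAux n₁ par c i)⁻¹ < ∑ i ∈ s, (1:ℝ) :=
            Finset.sum_lt_sum_of_nonempty h (fun i hi => (hterm i hi).1)
        _ = (s.card : ℝ) := by simp
        _ ≤ (c j : ℝ) := by exact_mod_cast (hc j hj).1
  linarith

/-- "LO"-QR decomposition of the consistency constraint matrix: `M_T = Q ⬝ B` for some
orthogonal `Q`, where the top `n₁` rows of `B` form a Generation Matrix of the `1`-order
subtree and the remaining rows are zero. -/
theorem consistencyMatrix_LO_QR (n n₁ : ℕ) [NeZero n]
    (f : Fin n → Fin n) (hf0 : f 0 = 0) (hf : ∀ i : Fin n, i ≠ 0 → f i < i)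
    (hn₁ : 1 ≤ n₁) (hn₁n : n₁ < n)
    (hleaf : ∀ i : Fin n, (∃ j : Fin n, j ≠ 0 ∧ f j = i) ↔ (i : ℕ) < n₁)
    (M : Matrix (Fin n) (Fin n₁) ℝ)
    (hM : ∀ (i : Fin n) (j : Fin n₁), M i j =
      if (i : ℕ) = (j : ℕ) then 1
      else if i ≠ 0 ∧ (j : ℕ) = (f i : ℕ) then -1 else 0) :
    ∃ (Q : Matrix (Fin n) (Fin n) ℝ) (w' u' : Fin n₁ → ℝ),
      Qᵀ * Q = 1 ∧
      (∀ i : Fin n₁, w' i ≠ 0) ∧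
      (∀ i : Fin n₁, (i : ℕ) ≠ 0 → u' i ≠ 0) ∧
      M = Q * Matrix.of (fun (i : Fin n) (j : Fin n₁) =>
        if hi : (i : ℕ) < n₁ then
          (if (i : ℕ) = (j : ℕ) then w' ⟨i, hi⟩
           else if i ≠ 0 ∧ (j : ℕ) = (f i : ℕ) then -u' ⟨i, hi⟩ else 0)
        else 0) := by
  have hnn : n₁ ≤ n := le_of_lt hn₁n
  set par : ℕ → ℕ := fun i => if h : i < n then (f ⟨i, h⟩ : ℕ) else 0 with hpar
  set c : ℕ → ℕ := fun j => ((Finset.univ : Finset (Fin n)).filter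
      (fun i => i ≠ 0 ∧ (j : ℕ) = (f i : ℕ))).card with hcdef
  have hparf : ∀ i : Fin n, par (i : ℕ) = (f i : ℕ) := by
    intro i
    simp only [hpar, i.2, dif_pos, Fin.eta]
  have hfi : ∀ i : Fin n, i ≠ 0 → (f i : ℕ) < (i : ℕ) := fun i h => hf i h
  have hne0 : ∀ i : Fin n, (0 : ℕ) < (i : ℕ) → i ≠ 0 := by
    intro i h h0
    rw [h0] at h
    simp at h
  -- reindexing between subtree-children as a `Fin n` filter and as a `ℕ` filter
  have hreidx : ∀ (jn : ℕ), jn < n₁ → ∀ g : ℕ → ℝ,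
      ∑ i ∈ (Finset.univ : Finset (Fin n)).filter
          (fun i : Fin n => (i : ℕ) < n₁ ∧ i ≠ 0 ∧ jn = (f i : ℕ)), g (i : ℕ)
      = ∑ m ∈ (Finset.Ioo jn n₁).filter (fun m => par m = jn), g m := by
    intro jn hjn g
    refine Finset.sum_bij' (fun (a : Fin n) _ => (a : ℕ))
      (fun m hm => (⟨m, by
        simp only [Finset.mem_filter, Finset.mem_Ioo] at hm
        omega⟩ : Fin n)) ?_ ?_ ?_ ?_ ?_
    · intro a ha
      simp only [Finset.mem_filter, Finset.mem_univ, true_and] at ha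
      simp only [Finset.mem_filter, Finset.mem_Ioo]
      have h2 : (f a : ℕ) < (a : ℕ) := hfi a ha.2.1
      refine ⟨⟨by omega, ha.1⟩, ?_⟩
      rw [hparf a]
      omega
    · intro m hm
      simp only [Finset.mem_filter, Finset.mem_Ioo] at hm
      simp only [Finset.mem_filter, Finset.mem_univ, true_and]
      have hmn : m < n := by omega
      have hp : par m = (f ⟨m, hmn⟩ : ℕ) := by
        simp only [hpar]
        rw [dif_pos hmn]
      refine ⟨hm.1.2, ?_, ?_⟩
      · apply hne0
        simp only [Fin.val_mk]
        omega
      · exact hm.2.symm.trans hp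
    · intro a ha
      exact Fin.eta _ _
    · intro m hm
      rfl
    · intro a ha
      rfl
  -- children count bounds
  have hc : ∀ j < n₁, ((Finset.Ioo j n₁).filter (fun i => par i = j)).card ≤ c j ∧ 1 ≤ c j := by
    intro j hj
    constructor
    · have h1 := hreidx j hj (fun _ => (1:ℝ))
      simp only [Finset.sum_const, nsmul_eq_mul, mul_one] at h1
      have h2 : ((Finset.univ : Finset (Fin n)).filter
          (fun i : Fin n => (i : ℕ) < n₁ ∧ i ≠ 0 ∧ j = (f i : ℕ))).card ≤ c j := by
        rw [hcdef]
        apply Finset.card_le_card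
        intro x hx
        simp only [Finset.mem_filter, Finset.mem_univ, true_and] at hx ⊢
        exact ⟨hx.2.1, hx.2.2⟩
      have h3 : ((Finset.Ioo j n₁).filter (fun i => par i = j)).card
          = ((Finset.univ : Finset (Fin n)).filter
            (fun i : Fin n => (i : ℕ) < n₁ ∧ i ≠ 0 ∧ j = (f i : ℕ))).card := by
        exact_mod_cast h1.symm
      omega
    · have hj' : ((⟨j, lt_trans hj hn₁n⟩ : Fin n) : ℕ) < n₁ := hj
      obtain ⟨i, hi0, hfij⟩ := (hleaf _).mpr hj'
      rw [hcdef]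
      refine Finset.card_pos.mpr ⟨i, ?_⟩
      simp only [Finset.mem_filter, Finset.mem_univ, true_and]
      exact ⟨hi0, by rw [hfij]⟩
  have hsq1 : ∀ j : Fin n₁, 1 < sqwAux n₁ par c (j : ℕ) :=
    fun j => sqwAux_gt_one n₁ par c hc j j.2
  have hsqpos : ∀ j : Fin n₁, 0 < sqwAux n₁ par c (j : ℕ) :=
    fun j => lt_trans one_pos (hsq1 j)
  set w' : Fin n₁ → ℝ := fun j => Real.sqrt (sqwAux n₁ par c (j : ℕ)) with hw'
  set u' : Fin n₁ → ℝ := fun j => (w' j)⁻¹ with hu'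
  have hwpos : ∀ j, 0 < w' j := fun j => Real.sqrt_pos.mpr (hsqpos j)
  have hw2 : ∀ j, w' j ^ 2 = sqwAux n₁ par c (j : ℕ) := fun j => Real.sq_sqrt (hsqpos j).le
  have hwu : ∀ j, w' j * u' j = 1 := fun j => mul_inv_cancel₀ (hwpos j).ne'
  have hu2 : ∀ j, u' j ^ 2 = (sqwAux n₁ par c (j : ℕ))⁻¹ := by
    intro j
    rw [hu', ← hw2 j]
    simp [inv_pow]
  -- the matrix `B` and row decompositions
  set B : Matrix (Fin n) (Fin n₁) ℝ := Matrix.of (fun (i : Fin n) (j : Fin n₁) =>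
    if hi : (i : ℕ) < n₁ then
      (if (i : ℕ) = (j : ℕ) then w' ⟨i, hi⟩
       else if i ≠ 0 ∧ (j : ℕ) = (f i : ℕ) then -u' ⟨i, hi⟩ else 0)
    else 0) with hB
  set e : Fin n₁ → Fin n → ℝ := fun j i => if (i : ℕ) = (j : ℕ) then 1 else 0 with he
  set g : Fin n₁ → Fin n → ℝ :=
    fun j i => if i ≠ 0 ∧ (j : ℕ) = (f i : ℕ) then -1 else 0 with hg
  set W : Fin n → ℝ := fun i => if h : (i : ℕ) < n₁ then w' ⟨i, h⟩ else 0 with hW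
  set U : Fin n → ℝ := fun i => if h : (i : ℕ) < n₁ then u' ⟨i, h⟩ else 0 with hU
  have hexcl : ∀ (j : Fin n₁) (i : Fin n), (i : ℕ) = (j : ℕ) →
      ¬(i ≠ 0 ∧ (j : ℕ) = (f i : ℕ)) := by
    rintro j i h1 ⟨h0, hfe⟩
    have := hfi i h0
    omega
  have hMrow : ∀ (j : Fin n₁) (i : Fin n), M i j = e j i + g j i := by
    intro j i
    rw [hM]
    by_cases h1 : (i : ℕ) = (j : ℕ)
    · rw [if_pos h1]
      simp [he, hg, h1, hexcl j i h1]
    · rw [if_neg h1]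
      simp only [he, hg, if_neg h1]
      by_cases h2 : i ≠ 0 ∧ (j : ℕ) = (f i : ℕ) <;> simp [h2]
  have hBrow : ∀ (j : Fin n₁) (i : Fin n), B i j = W i * e j i + U i * g j i := by
    intro j i
    by_cases hi : (i : ℕ) < n₁
    · rw [hB]
      simp only [Matrix.of_apply]
      rw [dif_pos hi]
      by_cases h1 : (i : ℕ) = (j : ℕ)
      · rw [if_pos h1]
        simp [he, hg, hW, hU, h1, hexcl j i h1, hi]
      · rw [if_neg h1]
        by_cases h2 : i ≠ 0 ∧ (j : ℕ) = (f i : ℕ)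
        · rw [if_pos h2]
          simp only [he, hg, hU, if_neg h1, if_pos h2]
          rw [dif_pos hi]
          ring
        · rw [if_neg h2]
          simp [he, hg, h1, h2]
    · have h1 : ¬((i : ℕ) = (j : ℕ)) := by have := j.2; omega
      rw [hB]
      simp only [Matrix.of_apply]
      rw [dif_neg hi]
      simp [he, hg, hW, hU, h1, hi]
  have hWU : ∀ i : Fin n, (i : ℕ) < n₁ → W i * U i = 1 := by
    intro i hi
    simp only [hW, hU]
    rw [dif_pos hi, dif_pos hi]
    exact hwu _
  have hWc : ∀ j : Fin n₁, W (Fin.castLE hnn j) = w' j := by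
    intro j
    simp only [hW]
    rw [dif_pos (show ((Fin.castLE hnn j : Fin n) : ℕ) < n₁ from j.2)]
    rfl
  have hcnd : ∀ (j : Fin n₁) (i : Fin n),
      ((i : ℕ) = (j : ℕ)) = (i = Fin.castLE hnn j) := by
    intro j i
    apply propext
    constructor
    · intro h
      exact Fin.ext h
    · intro h
      subst h
      rfl
  -- the Gram identity
  have hGram : ∀ j k : Fin n₁, (∑ i, M i j * M i k) = ∑ i, B i j * B i k := by
    intro j k
    have hpt1 : ∀ i : Fin n, (W i * U i) * (e j i * g k i) = e j i * g k i := by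
      intro i
      by_cases h1 : (i : ℕ) = (j : ℕ)
      · rw [hWU i (by rw [h1]; exact j.2), one_mul]
      · have h0 : e j i = 0 := by simp [he, h1]
        rw [h0]
        ring
    have hpt2 : ∀ i : Fin n, (W i * U i) * (g j i * e k i) = g j i * e k i := by
      intro i
      by_cases h1 : (i : ℕ) = (k : ℕ)
      · rw [hWU i (by rw [h1]; exact k.2), one_mul]
      · have h0 : e k i = 0 := by simp [he, h1]
        rw [h0]
        ring
    have hE : ∀ i : Fin n, M i j * M i k =
        (e j i * e k i + g j i * g k i) + (e j i * g k i + g j i * e k i) := by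
      intro i
      rw [hMrow, hMrow]
      ring
    have hEB : ∀ i : Fin n, B i j * B i k =
        (W i ^ 2 * (e j i * e k i) + U i ^ 2 * (g j i * g k i)) +
          ((W i * U i) * (e j i * g k i) + (W i * U i) * (g j i * e k i)) := by
      intro i
      rw [hBrow, hBrow]
      ring
    have MAIN : (∑ i, (e j i * e k i + g j i * g k i))
        = ∑ i, (W i ^ 2 * (e j i * e k i) + U i ^ 2 * (g j i * g k i)) := by
      by_cases hjk : j = k
      · subst hjk
        have L1 : (∑ i, e j i * e j i) = 1 := by
          have hpt : ∀ i : Fin n, e j i * e j i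
              = if i = Fin.castLE hnn j then (1:ℝ) else 0 := by
            intro i
            simp only [he, hcnd j i]
            split_ifs <;> norm_num
          rw [Finset.sum_congr rfl (fun i _ => hpt i),
            Finset.sum_ite_eq' Finset.univ (Fin.castLE hnn j) (fun _ => (1:ℝ)),
            if_pos (Finset.mem_univ _)]
        have L2 : (∑ i, g j i * g j i) = (c (j : ℕ) : ℝ) := by
          have hpt : ∀ i : Fin n, g j i * g j i
              = if i ≠ 0 ∧ (j : ℕ) = (f i : ℕ) then (1:ℝ) else 0 := by
            intro i
            simp only [hg]
            split_ifs <;> norm_num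
          rw [Finset.sum_congr rfl (fun i _ => hpt i), Finset.sum_boole, hcdef]
        have R1 : (∑ i, W i ^ 2 * (e j i * e j i)) = w' j ^ 2 := by
          have hpt : ∀ i : Fin n, W i ^ 2 * (e j i * e j i)
              = if i = Fin.castLE hnn j then W i ^ 2 else 0 := by
            intro i
            simp only [he, hcnd j i]
            split_ifs <;> ring
          rw [Finset.sum_congr rfl (fun i _ => hpt i),
            Finset.sum_ite_eq' Finset.univ (Fin.castLE hnn j) (fun i => W i ^ 2),
            if_pos (Finset.mem_univ _), hWc]
        have R2 : (∑ i, U i ^ 2 * (g j i * g j i))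
            = 1 + (c (j : ℕ) : ℝ) - sqwAux n₁ par c (j : ℕ) := by
          have hpt : ∀ i : Fin n, U i ^ 2 * (g j i * g j i)
              = if (i : ℕ) < n₁ ∧ i ≠ 0 ∧ (j : ℕ) = (f i : ℕ)
                then (sqwAux n₁ par c (i : ℕ))⁻¹ else 0 := by
            intro i
            simp only [hg, hU]
            by_cases h2 : i ≠ 0 ∧ (j : ℕ) = (f i : ℕ)
            · rw [if_pos h2]
              by_cases hi : (i : ℕ) < n₁
              · rw [dif_pos hi, if_pos ⟨hi, h2⟩]
                have h3 := hu2 ⟨(i : ℕ), hi⟩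
                simp only [Fin.val_mk] at h3
                rw [← h3]
                ring
              · rw [dif_neg hi, if_neg (fun hcon => hi hcon.1)]
                ring
            · rw [if_neg h2, if_neg (fun hcon => h2 hcon.2)]
              ring
          rw [Finset.sum_congr rfl (fun i _ => hpt i), ← Finset.sum_filter,
            hreidx (j : ℕ) j.2 (fun m => (sqwAux n₁ par c m)⁻¹)]
          have h4 := sqwAux_eq n₁ par c (j : ℕ)
          linarith
        rw [Finset.sum_add_distrib, Finset.sum_add_distrib, L1, L2, R1, R2, hw2 j]
        ring
      · have hjk' : (j : ℕ) ≠ (k : ℕ) := fun h => hjk (Fin.ext h)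
        apply Finset.sum_congr rfl
        intro i _
        have hee : e j i * e k i = 0 := by
          by_cases a : (i : ℕ) = (j : ℕ)
          · have b : ¬((i : ℕ) = (k : ℕ)) := by omega
            simp [he, b]
          · simp [he, a]
        have hgg : g j i * g k i = 0 := by
          by_cases a : i ≠ 0 ∧ (j : ℕ) = (f i : ℕ)
          · have b : ¬(i ≠ 0 ∧ (k : ℕ) = (f i : ℕ)) := by
              rintro ⟨_, hb⟩
              exact hjk' (by omega)
            simp [hg, b]
          · simp [hg, a]
        rw [hee, hgg]
        ring
    calc (∑ i, M i j * M i k)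
        = ∑ i, ((e j i * e k i + g j i * g k i) + (e j i * g k i + g j i * e k i)) :=
          Finset.sum_congr rfl fun i _ => hE i
      _ = (∑ i, (e j i * e k i + g j i * g k i)) +
            ∑ i, (e j i * g k i + g j i * e k i) := Finset.sum_add_distrib
      _ = (∑ i, (W i ^ 2 * (e j i * e k i) + U i ^ 2 * (g j i * g k i))) +
            ∑ i, ((W i * U i) * (e j i * g k i) + (W i * U i) * (g j i * e k i)) := by
          rw [MAIN]
          congr 1
          apply Finset.sum_congr rfl
          intro i _
          rw [hpt1 i, hpt2 i]
      _ = ∑ i, B i j * B i k := by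
          rw [← Finset.sum_add_distrib]
          apply Finset.sum_congr rfl
          intro i _
          exact (hEB i).symm
  -- the top block `G` of `B` is invertible
  set G : Matrix (Fin n₁) (Fin n₁) ℝ :=
    fun i j => B (Fin.castLE hnn i) j with hG
  have hGB : ∀ i j : Fin n₁, G i j = B (Fin.castLE hnn i) j := fun _ _ => rfl
  have hBtop : ∀ (i : Fin n) (hi : (i : ℕ) < n₁) (j : Fin n₁), B i j = G ⟨(i : ℕ), hi⟩ j := by
    intro i hi j
    rw [hGB]
    have h9 : Fin.castLE hnn (⟨(i : ℕ), hi⟩ : Fin n₁) = i := Fin.ext rfl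
    rw [h9]
  have hB0 : ∀ (i : Fin n), ¬((i : ℕ) < n₁) → ∀ j : Fin n₁, B i j = 0 := by
    intro i hi j
    rw [hB]
    simp only [Matrix.of_apply]
    rw [dif_neg hi]
  have hGdiag : ∀ i : Fin n₁, G i i = w' i := by
    intro i
    rw [hGB, hB]
    simp only [Matrix.of_apply]
    simp only [Fin.coe_castLE]
    rw [dif_pos i.2]
    simp
  have hGtri : Gᵀ.BlockTriangular id := by
    intro a b hab
    simp only [id] at hab
    rw [Matrix.transpose_apply, hGB, hB]
    simp only [Matrix.of_apply]
    rw [dif_pos (show ((Fin.castLE hnn b : Fin n) : ℕ) < n₁ from b.2)]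
    have h1 : ¬(((Fin.castLE hnn b : Fin n) : ℕ) = (a : ℕ)) := by
      simp only [Fin.coe_castLE]
      exact fun h => absurd (Fin.ext h : b = a) (ne_of_gt hab).symm
    rw [if_neg h1]
    have h2 : ¬((Fin.castLE hnn b : Fin n) ≠ 0 ∧ (a : ℕ) = ((f (Fin.castLE hnn b)) : ℕ)) := by
      rintro ⟨hb0, hba⟩
      have := hfi _ hb0
      simp only [Fin.coe_castLE] at this hba
      have hba2 : (b : ℕ) < (a : ℕ) := hab
      omega
    rw [if_neg h2]
  have hdet : IsUnit G.det := by
    rw [isUnit_iff_ne_zero, ← Matrix.det_transpose, Matrix.det_of_upperTriangular hGtri]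
    apply Finset.prod_ne_zero_iff.mpr
    intro i _
    rw [Matrix.transpose_apply, hGdiag]
    exact (hwpos i).ne'
  set N : Matrix (Fin n) (Fin n₁) ℝ := M * G⁻¹ with hN
  have hNG : N * G = M := by
    rw [hN, Matrix.mul_assoc, Matrix.nonsing_inv_mul G hdet, Matrix.mul_one]
  -- summing over `Fin n` for functions supported on the first `n₁` indices
  have hsumcast : ∀ F : Fin n → ℝ, (∀ i : Fin n, ¬((i : ℕ) < n₁) → F i = 0) →
      (∑ i : Fin n, F i) = ∑ i : Fin n₁, F (Fin.castLE hnn i) := by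
    intro F hF
    have hmap : (∑ i : Fin n₁, F (Fin.castLE hnn i))
        = ∑ i ∈ Finset.univ.map (Fin.castLEEmb hnn), F i := by
      rw [Finset.sum_map]
      rfl
    rw [hmap]
    apply (Finset.sum_subset (Finset.subset_univ _) _).symm
    intro x _ hx
    apply hF
    intro hxlt
    apply hx
    simp only [Finset.mem_map, Finset.mem_univ, true_and]
    exact ⟨⟨(x : ℕ), hxlt⟩, Fin.ext rfl⟩
  -- `N` has orthonormal columns
  have hNtN : Nᵀ * N = 1 := by
    have hMM : Mᵀ * M = Gᵀ * G := by
      ext j k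
      rw [Matrix.mul_apply, Matrix.mul_apply]
      simp only [Matrix.transpose_apply]
      rw [hGram j k]
      rw [hsumcast (fun i => B i j * B i k) (fun i hi => by
        show B i j * B i k = 0
        rw [hB0 i hi j]
        ring)]
      try apply Finset.sum_congr rfl
      try intro i _
      try rw [hGB, hGB]
    calc Nᵀ * N = (G⁻¹ᵀ * Mᵀ) * (M * G⁻¹) := by rw [hN, Matrix.transpose_mul]
      _ = G⁻¹ᵀ * ((Mᵀ * M) * G⁻¹) := by
          rw [Matrix.mul_assoc, Matrix.mul_assoc]
      _ = G⁻¹ᵀ * ((Gᵀ * G) * G⁻¹) := by rw [hMM]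
      _ = G⁻¹ᵀ * (Gᵀ * (G * G⁻¹)) := by rw [Matrix.mul_assoc]
      _ = G⁻¹ᵀ * Gᵀ := by rw [Matrix.mul_nonsing_inv G hdet, Matrix.mul_one]
      _ = (G * G⁻¹)ᵀ := by rw [Matrix.transpose_mul]
      _ = 1 := by rw [Matrix.mul_nonsing_inv G hdet, Matrix.transpose_one]
  -- build the orthonormal family of the first `n₁` columns and extend it to a basis
  set V : Fin n → EuclideanSpace ℝ (Fin n) := fun k =>
    if h : (k : ℕ) < n₁ then WithLp.toLp 2 (fun i => N i ⟨(k : ℕ), h⟩) else 0 with hV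
  have hVsp : ∀ (k : Fin n) (h : (k : ℕ) < n₁) (i : Fin n), V k i = N i ⟨(k : ℕ), h⟩ := by
    intro k h i
    simp only [hV]
    rw [dif_pos h]
  have hVo : Orthonormal ℝ (Set.restrict {k : Fin n | (k : ℕ) < n₁} V) := by
    rw [orthonormal_iff_ite]
    rintro ⟨k₁, h₁⟩ ⟨k₂, h₂⟩
    show (inner ℝ (V k₁) (V k₂) : ℝ) = _
    have h₁' : (k₁ : ℕ) < n₁ := h₁
    have h₂' : (k₂ : ℕ) < n₁ := h₂
    have hinner : (inner ℝ (V k₁) (V k₂) : ℝ)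
        = ∑ i : Fin n, N i ⟨(k₁ : ℕ), h₁'⟩ * N i ⟨(k₂ : ℕ), h₂'⟩ := by
      rw [PiLp.inner_apply]
      apply Finset.sum_congr rfl
      intro i _
      rw [hVsp k₁ h₁' i, hVsp k₂ h₂' i]
      simp [RCLike.inner_apply, mul_comm]
    rw [hinner]
    have h6 := congrFun (congrFun hNtN ⟨(k₁ : ℕ), h₁'⟩) ⟨(k₂ : ℕ), h₂'⟩
    rw [Matrix.mul_apply] at h6
    simp only [Matrix.transpose_apply] at h6
    rw [h6, Matrix.one_apply]
    simp only [Fin.mk.injEq, Subtype.mk.injEq, Fin.ext_iff]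
  have hcard : Module.finrank ℝ (EuclideanSpace ℝ (Fin n)) = Fintype.card (Fin n) := by
    simp
  obtain ⟨b, hb⟩ := hVo.exists_orthonormalBasis_extension_of_card_eq hcard
  set Q : Matrix (Fin n) (Fin n) ℝ := fun i k => b k i with hQ
  have hQorth : Qᵀ * Q = 1 := by
    ext a d
    rw [Matrix.mul_apply, Matrix.one_apply]
    have h7 := orthonormal_iff_ite.mp b.orthonormal a d
    rw [PiLp.inner_apply] at h7
    simp only [RCLike.inner_apply, starRingEnd_apply, star_trivial] at h7
    simp only [Matrix.transpose_apply, hQ]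
    rw [← h7]
    try rfl
    exact Finset.sum_congr rfl fun x _ => mul_comm _ _
  refine ⟨Q, w', u', hQorth, fun i => (hwpos i).ne', fun i _ => inv_ne_zero (hwpos i).ne', ?_⟩
  rw [← hB]
  ext i j
  rw [Matrix.mul_apply]
  rw [hsumcast (fun k => Q i k * B k j) (fun k hk => by
    show Q i k * B k j = 0
    rw [hB0 k hk j]
    ring)]
  symm
  have hQc : ∀ k : Fin n₁, Q i (Fin.castLE hnn k) = N i k := by
    intro k
    have hmem : (Fin.castLE hnn k : Fin n) ∈ {m : Fin n | (m : ℕ) < n₁} := k.2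
    rw [hQ]
    show b (Fin.castLE hnn k) i = N i k
    rw [hb _ hmem, hVsp _ (show ((Fin.castLE hnn k : Fin n) : ℕ) < n₁ from k.2) i]
    congr 1
    try exact Fin.ext rfl
  calc (∑ k : Fin n₁, Q i (Fin.castLE hnn k) * B (Fin.castLE hnn k) j)
      = ∑ k : Fin n₁, N i k * G k j := by
        apply Finset.sum_congr rfl
        intro k _
        rw [hQc k, hGB]
    _ = (N * G) i j := (Matrix.mul_apply).symm
    _ = M i j := by rw [hNG]
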